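/- Let σ:ℝ→ℝ be a C^∞ function that is not a polynomial. Then for every compact set K ⊂ ℝ^d, the set Σ_d(σ) = span{ x ↦ σ(ω·x + b) : ω ∈ ℝ^d, b ∈ ℝ } is dense in C(K) with the uniform norm; in particular the uniform closure of Σ_d(σ) on K contains all polynomials in x₁,…,x_d. -/

import Mathlib

open MeasureTheory RealInnerProductSpace

noncomputable section

namespace SigmaSpanAux

/-- Coordinate maps on Euclidean space are continuous. -/
lemma contApply {d : ℕ} (i : Fin d) : Continuous fun x : EuclideanSpace ℝ (Fin d) => x i :=
  (EuclideanSpace.proj i).continuous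

lemma contInner {d : ℕ} (g : ℝ → ℝ) (hg : Continuous g) (ω : EuclideanSpace ℝ (Fin d)) (b : ℝ) :
    Continuous fun x : EuclideanSpace ℝ (Fin d) => g (⟪ω, x⟫ + b) :=
  hg.comp ((continuous_const.inner continuous_id).add continuous_const)

/-- Restriction of a continuous function to `K` as a bundled continuous map. -/
def rmk {d : ℕ} (K : Set (EuclideanSpace ℝ (Fin d))) (f : EuclideanSpace ℝ (Fin d) → ℝ)
    (hf : Continuous f) : C(K, ℝ) := ⟨fun x => f x, hf.comp continuous_subtype_val⟩

@[simp] lemma rmk_apply {d : ℕ} (K : Set (EuclideanSpace ℝ (Fin d)))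
    (f : EuclideanSpace ℝ (Fin d) → ℝ) (hf : Continuous f) (x : K) :
    rmk K f hf x = f x := rfl

/-- Quantitative first-order Taylor estimate, uniform over bounded `y, v`. -/
lemma key {g g' : ℝ → ℝ} (hg : ∀ y, HasDerivAt g (g' y) y) (hg' : Continuous g')
    (R M ε : ℝ) (hε : 0 < ε) :
    ∃ δ > 0, ∀ h y v : ℝ, |h| ≤ δ → |y| ≤ R → |v| ≤ M →
      |g (y + h * v) - g y - h * (v * g' y)| ≤ ε * |h| := by
  set M' := max M 0 with hM'def
  set R' := max R 0 with hR'def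
  have hM'0 : 0 ≤ M' := le_max_right _ _
  have hR'0 : 0 ≤ R' := le_max_right _ _
  have hJc : IsCompact (Metric.closedBall (0:ℝ) (R' + M')) := isCompact_closedBall _ _
  have huc : UniformContinuousOn g' (Metric.closedBall (0:ℝ) (R' + M')) :=
    hJc.uniformContinuousOn_of_continuous hg'.continuousOn
  have hε1 : 0 < ε / (M' + 1) := by positivity
  obtain ⟨δ₁, hδ₁, hδ⟩ := Metric.uniformContinuousOn_iff.1 huc (ε / (M' + 1)) hε1
  refine ⟨min 1 (δ₁ / (M' + 1)), by positivity, fun h y v hh hy hv => ?_⟩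
  rcases eq_or_ne h 0 with rfl | hne
  · simp
  have hvM : |v| ≤ M' := hv.trans (le_max_left _ _)
  have hyR : |y| ≤ R' := hy.trans (le_max_left _ _)
  have hh1 : |h| ≤ 1 := hh.trans (min_le_left _ _)
  have hh2 : |h| ≤ δ₁ / (M' + 1) := hh.trans (min_le_right _ _)
  have hhv : |h * v| ≤ M' := by
    rw [abs_mul]
    calc |h| * |v| ≤ 1 * M' := by
          exact mul_le_mul hh1 hvM (abs_nonneg _) zero_le_one
      _ = M' := one_mul _
  have hhvδ : |h * v| < δ₁ := by
    rw [abs_mul]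
    calc |h| * |v| ≤ (δ₁ / (M' + 1)) * M' :=
          mul_le_mul hh2 hvM (abs_nonneg _) (by positivity)
      _ < δ₁ := by rw [div_mul_eq_mul_div, div_lt_iff₀ (by positivity)]; nlinarith
  have hJmem : ∀ z ∈ Set.uIcc y (y + h * v), z ∈ Metric.closedBall (0:ℝ) (R' + M') := by
    intro z hz
    have h1 : |z - y| ≤ |h * v| := by
      rcases Set.mem_uIcc.1 hz with ⟨h1, h2⟩ | ⟨h1, h2⟩ <;>
        · rw [abs_le]
          constructor <;> cases abs_cases (h * v) <;> linarith
    have : |z| ≤ R' + M' := by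
      calc |z| = |y + (z - y)| := by ring_nf
        _ ≤ |y| + |z - y| := abs_add_le _ _
        _ ≤ R' + M' := add_le_add hyR (h1.trans hhv)
    simpa [Real.dist_eq] using this
  have hyJ : y ∈ Metric.closedBall (0:ℝ) (R' + M') := by
    simp only [Metric.mem_closedBall, Real.dist_eq, sub_zero]
    linarith
  have hbound : ∀ z ∈ Set.uIcc y (y + h * v), ‖g' z - g' y‖ ≤ ε / (M' + 1) := by
    intro z hz
    have h1 : |z - y| ≤ |h * v| := by
      rcases Set.mem_uIcc.1 hz with ⟨h1, h2⟩ | ⟨h1, h2⟩ <;>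
        · rw [abs_le]
          constructor <;> cases abs_cases (h * v) <;> linarith
    have hd : dist z y < δ₁ := by
      rw [Real.dist_eq]; exact lt_of_le_of_lt h1 hhvδ
    have := hδ z (hJmem z hz) y hyJ hd
    rw [Real.dist_eq] at this
    simpa [Real.norm_eq_abs] using this.le
  have hder : ∀ z ∈ Set.uIcc y (y + h * v),
      HasDerivWithinAt (fun z => g z - g' y * z) (g' z - g' y) (Set.uIcc y (y + h * v)) z := by
    intro z _
    exact ((hg z).sub (by simpa using (hasDerivAt_id z).const_mul (g' y))).hasDerivWithinAt
  have hmvt := (convex_uIcc y (y + h * v)).norm_image_sub_le_of_norm_hasDerivWithin_le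
    hder hbound (Set.left_mem_uIcc) (Set.right_mem_uIcc)
  have heq : g (y + h * v) - g y - h * (v * g' y)
      = (fun z => g z - g' y * z) (y + h * v) - (fun z => g z - g' y * z) y := by ring
  rw [heq, ← Real.norm_eq_abs]
  calc ‖(fun z => g z - g' y * z) (y + h * v) - (fun z => g z - g' y * z) y‖
      ≤ ε / (M' + 1) * ‖(y + h * v) - y‖ := hmvt
    _ = ε / (M' + 1) * |h * v| := by rw [add_sub_cancel_left, Real.norm_eq_abs]
    _ ≤ ε / (M' + 1) * (|h| * M') := by
        rw [abs_mul]
        exact mul_le_mul_of_nonneg_left (mul_le_mul_of_nonneg_left hvM (abs_nonneg _)) hε1.le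
    _ ≤ ε * |h| := by
        rw [div_mul_eq_mul_div, div_le_iff₀ (by positivity)]
        nlinarith [abs_nonneg h, hε.le]


/-- If `A` is a closed submodule of `C(K,ℝ)` containing all `x ↦ c x * g (⟪ω,x⟫+b)`, then it
contains all `x ↦ (c x * x i) * g' (⟪ω,x⟫+b)` (differentiate in the `ω i` direction). -/
lemma step {d : ℕ} {K : Set (EuclideanSpace ℝ (Fin d))} (hK : IsCompact K)
    (A : Submodule ℝ C(K, ℝ)) (hA : IsClosed (A : Set C(K, ℝ)))
    {c : EuclideanSpace ℝ (Fin d) → ℝ} (hc : Continuous c)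
    {g g' : ℝ → ℝ} (hg : ∀ y, HasDerivAt g (g' y) y) (hg' : Continuous g') (hgc : Continuous g)
    (hmem : ∀ (ω : EuclideanSpace ℝ (Fin d)) (b : ℝ),
      rmk K (fun x => c x * g (⟪ω, x⟫ + b)) (hc.mul (contInner g hgc ω b)) ∈ A)
    (i : Fin d) (ω : EuclideanSpace ℝ (Fin d)) (b : ℝ) :
    rmk K (fun x => (c x * x i) * g' (⟪ω, x⟫ + b))
      ((hc.mul (contApply i)).mul (contInner g' hg' ω b)) ∈ A := by
  haveI : CompactSpace K := isCompact_iff_compactSpace.mp hK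
  obtain ⟨C0, hC0⟩ := hK.exists_bound_of_continuousOn hc.continuousOn
  obtain ⟨M0, hM0⟩ := hK.exists_bound_of_continuousOn (contApply i).continuousOn
  obtain ⟨R0, hR0⟩ := hK.exists_bound_of_continuousOn
    (((continuous_const.inner continuous_id).add continuous_const :
      Continuous fun x : EuclideanSpace ℝ (Fin d) => ⟪ω, x⟫ + b)).continuousOn
  set Cb := max C0 0 with hCbdef
  set Mb := max M0 0 with hMbdef
  set Rb := max R0 0 with hRbdef
  have hCb0 : 0 ≤ Cb := le_max_right _ _
  set T : C(K, ℝ) := rmk K (fun x => (c x * x i) * g' (⟪ω, x⟫ + b))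
      ((hc.mul (contApply i)).mul (contInner g' hg' ω b)) with hTdef
  set seq : ℕ → C(K, ℝ) := fun n =>
    ((n : ℝ) + 1) • (rmk K (fun x => c x * g (⟪ω + ((n : ℝ) + 1)⁻¹ • EuclideanSpace.single i (1:ℝ), x⟫ + b))
        (hc.mul (contInner g hgc _ b))
      - rmk K (fun x => c x * g (⟪ω, x⟫ + b)) (hc.mul (contInner g hgc ω b))) with hseqdef
  have hseqA : ∀ n, seq n ∈ A := fun n => A.smul_mem _ (A.sub_mem (hmem _ _) (hmem _ _))
  have htend : Filter.Tendsto seq Filter.atTop (nhds T) := by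
    rw [Metric.tendsto_atTop]
    intro ε hε
    have hε2 : 0 < ε / (2 * (Cb + 1)) := by positivity
    obtain ⟨δ, hδpos, hkey⟩ := key hg hg' Rb Mb (ε / (2 * (Cb + 1))) hε2
    obtain ⟨N, hN⟩ := exists_nat_gt δ⁻¹
    refine ⟨N, fun n hn => ?_⟩
    have hn1 : (0:ℝ) < (n : ℝ) + 1 := by positivity
    have hne : ((n:ℝ) + 1) ≠ 0 := hn1.ne'
    set h : ℝ := ((n : ℝ) + 1)⁻¹ with hhdef
    have hh0 : 0 < h := by positivity
    have hinv : ((n:ℝ) + 1) * h = 1 := mul_inv_cancel₀ hne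
    have hhδ : h ≤ δ := by
      have h1 : δ⁻¹ ≤ (n : ℝ) + 1 := by
        have : (N : ℝ) ≤ (n : ℝ) := Nat.cast_le.mpr hn
        linarith [hN.le]
      calc h = ((n:ℝ) + 1)⁻¹ := rfl
        _ ≤ (δ⁻¹)⁻¹ := by
            apply inv_anti₀ (by positivity) h1
        _ = δ := inv_inv δ
    rw [ContinuousMap.dist_lt_iff hε]
    intro x
    set y : ℝ := ⟪ω, (x : EuclideanSpace ℝ (Fin d))⟫ + b with hydef
    set v : ℝ := (x : EuclideanSpace ℝ (Fin d)) i with hvdef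
    have harg : ⟪ω + h • EuclideanSpace.single i (1:ℝ), (x : EuclideanSpace ℝ (Fin d))⟫ + b
        = y + h * v := by
      simp only [inner_add_left, real_inner_smul_left, EuclideanSpace.inner_single_left,
        RCLike.star_def, map_one, one_mul, hydef, hvdef]
      ring
    have hyR : |y| ≤ Rb := by
      have := hR0 _ x.2
      rw [Real.norm_eq_abs] at this
      exact this.trans (le_max_left _ _)
    have hvM : |v| ≤ Mb := by
      have := hM0 _ x.2
      rw [Real.norm_eq_abs] at this
      exact this.trans (le_max_left _ _)
    have hcC : |c x| ≤ Cb := by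
      have := hC0 _ x.2
      rw [Real.norm_eq_abs] at this
      exact this.trans (le_max_left _ _)
    have hb := hkey h y v (by rw [abs_of_pos hh0]; exact hhδ) hyR hvM
    have expand : seq n x - T x
        = ((n:ℝ) + 1) * (c x * (g (y + h * v) - g y - h * (v * g' y))) := by
      simp only [hseqdef, hTdef, ContinuousMap.smul_apply, ContinuousMap.sub_apply, rmk_apply,
        smul_eq_mul, harg]
      rw [← hydef, ← hvdef]
      rw [← hhdef, harg]
      linear_combination (c (x : EuclideanSpace ℝ (Fin d)) * v * g' y) * hinv
    have habs : dist (seq n x) (T x)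
        = ((n:ℝ) + 1) * (|c x| * |g (y + h * v) - g y - h * (v * g' y)|) := by
      rw [Real.dist_eq, expand, abs_mul, abs_mul, abs_of_pos hn1]
    rw [habs]
    calc ((n:ℝ) + 1) * (|c x| * |g (y + h * v) - g y - h * (v * g' y)|)
        ≤ ((n:ℝ) + 1) * (Cb * (ε / (2 * (Cb + 1)) * |h|)) := by
          apply mul_le_mul_of_nonneg_left _ hn1.le
          exact mul_le_mul hcC hb (abs_nonneg _) hCb0
      _ = Cb * (ε / (2 * (Cb + 1))) := by
          rw [abs_of_pos hh0]
          linear_combination (Cb * (ε / (2 * (Cb + 1)))) * hinv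
      _ < ε := by
          rw [← mul_div_assoc, div_lt_iff₀ (by positivity)]
          nlinarith
  exact hA.mem_of_tendsto htend (Filter.Eventually.of_forall hseqA)


/-- Every real polynomial has a polynomial antiderivative. -/
lemma exists_antideriv (P : Polynomial ℝ) :
    ∃ Q : Polynomial ℝ, ∀ x : ℝ, HasDerivAt (fun t => Q.eval t) (P.eval x) x := by
  induction P using Polynomial.induction_on' with
  | add p q hp hq =>
    obtain ⟨Qp, hQp⟩ := hp
    obtain ⟨Qq, hQq⟩ := hq
    exact ⟨Qp + Qq, fun x => by
      simp only [Polynomial.eval_add]; exact (hQp x).add (hQq x)⟩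
  | monomial n a =>
    refine ⟨Polynomial.C (a / (n + 1)) * Polynomial.X ^ (n + 1), fun x => ?_⟩
    have h1 : HasDerivAt (fun t : ℝ => a / (n + 1) * t ^ (n + 1))
        (a / (n + 1) * ((n + 1) * x ^ n)) x := by
      have := (hasDerivAt_pow (n + 1) x).const_mul (a / ((n : ℝ) + 1))
      simpa using this
    have hne : ((n : ℝ) + 1) ≠ 0 := by positivity
    have h2 : a / (n + 1) * ((n + 1) * x ^ n) = a * x ^ n := by field_simp
    rw [h2] at h1
    simpa [Polynomial.eval_monomial, Polynomial.eval_mul, Polynomial.eval_pow] using h1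
/-- A smooth function whose `k`-th derivative vanishes identically is a polynomial. -/
lemma poly_of_deriv_zero : ∀ (k : ℕ) (f : ℝ → ℝ), ContDiff ℝ (⊤ : ℕ∞) f →
    (∀ t, iteratedDeriv k f t = 0) → ∃ P : Polynomial ℝ, ∀ t, f t = P.eval t := by
  intro k
  induction k with
  | zero =>
    intro f _ h0
    exact ⟨0, fun t => by simpa using h0 t⟩
  | succ k ih =>
    intro f hf h0
    have hdf : ContDiff ℝ (⊤ : ℕ∞) (deriv f) := (contDiff_infty_iff_deriv.mp hf).2
    obtain ⟨P, hP⟩ := ih (deriv f) hdf (fun t => by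
      have := h0 t
      rwa [iteratedDeriv_succ'] at this)
    obtain ⟨Q, hQ⟩ := exists_antideriv P
    have hfd : Differentiable ℝ f := hf.differentiable (by simp)
    have hQd : Differentiable ℝ fun t : ℝ => Q.eval t := Q.differentiable
    have hD : ∀ t, deriv (fun s => f s - Q.eval s) t = 0 := by
      intro t
      rw [deriv_fun_sub (hfd t) (hQd t), (hQ t).deriv, hP t, sub_self]
    have hconst := is_const_of_deriv_eq_zero (hfd.sub hQd) hD
    refine ⟨Q + Polynomial.C (f 0 - Q.eval 0), fun t => ?_⟩
    have := hconst t 0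
    simp only [Polynomial.eval_add, Polynomial.eval_C]
    simp only [Pi.sub_apply] at this
    linarith [this]


/-- Product over the multiset of a finitely supported exponent function. -/
lemma prod_toMultiset_map {ι M : Type*} [CommMonoid M] (α : ι →₀ ℕ) (g : ι → M) :
    (α.toMultiset.map g).prod = α.prod fun a n => g a ^ n := by
  refine α.induction ?_ ?_
  · simp
  · intro a n f ha hn ih
    rw [Finsupp.toMultiset_add, Multiset.map_add, Multiset.prod_add, ih,
      Finsupp.toMultiset_single,
      Finsupp.prod_add_index' (fun _ => pow_zero _) (fun _ _ _ => pow_add _ _ _)]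
    congr 1
    rw [Multiset.map_nsmul, Multiset.map_singleton, Multiset.prod_nsmul, Multiset.prod_singleton]
    exact (Finsupp.prod_single_index (h := fun b e => g b ^ e) (pow_zero (g a))).symm

lemma list_prod_eq {d : ℕ} (α : Fin d →₀ ℕ) (x : EuclideanSpace ℝ (Fin d)) :
    ((α.toMultiset.toList.map fun j => x j).prod) = α.prod fun j n => x j ^ n := by
  rw [← Multiset.prod_coe, ← Multiset.map_coe, Multiset.coe_toList, prod_toMultiset_map]

lemma contMono {d : ℕ} (α : Fin d →₀ ℕ) :
    Continuous fun x : EuclideanSpace ℝ (Fin d) => α.prod fun j n => x j ^ n :=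
  continuous_finset_prod _ fun j _ => (contApply j).pow _

end SigmaSpanAux

open SigmaSpanAux

/-- `Σ_d(σ)`: the linear span of the functions `x ↦ σ(ω·x + b)` on `ℝ^d`. -/
def SigmaSpan (d : ℕ) (σ : ℝ → ℝ) : Submodule ℝ (EuclideanSpace ℝ (Fin d) → ℝ) :=
  Submodule.span ℝ {h : EuclideanSpace ℝ (Fin d) → ℝ |
    ∃ (ω : EuclideanSpace ℝ (Fin d)) (b : ℝ), h = fun x => σ (⟪ω, x⟫ + b)}

/-- Let `σ : ℝ → ℝ` be a `C^∞` function that is not a polynomial.  Then for every compact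
`K ⊆ ℝ^d`, `Σ_d(σ)` is dense in `C(K)` with the uniform norm, and in particular the
uniform closure of `Σ_d(σ)` on `K` contains all polynomials in `x₁, …, x_d`. -/
theorem span_dense_of_contDiff_not_polynomial (d : ℕ) (σ : ℝ → ℝ)
    (hσ : ContDiff ℝ (⊤ : ℕ∞) σ)
    (hnotpoly : ¬ ∃ P : Polynomial ℝ, ∀ t : ℝ, σ t = P.eval t)
    (K : Set (EuclideanSpace ℝ (Fin d))) (hK : IsCompact K) :
    (∀ f : EuclideanSpace ℝ (Fin d) → ℝ, ContinuousOn f K → ∀ ε : ℝ, 0 < ε →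
      ∃ g ∈ SigmaSpan d σ, ∀ x ∈ K, |f x - g x| < ε) ∧
    (∀ P : MvPolynomial (Fin d) ℝ, ∀ ε : ℝ, 0 < ε →
      ∃ g ∈ SigmaSpan d σ, ∀ x ∈ K,
        |MvPolynomial.eval (fun i => x i) P - g x| < ε) := by
  haveI : CompactSpace K := isCompact_iff_compactSpace.mp hK
  have hσc : Continuous σ := hσ.continuous
  have hsm : ∀ m : ℕ, ContDiff ℝ (⊤ : ℕ∞) (iteratedDeriv m σ) := fun m => by
    rw [iteratedDeriv_eq_iterate]; exact hσ.iterate_deriv m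
  have hcont : ∀ m, Continuous (iteratedDeriv m σ) := fun m => (hsm m).continuous
  have hder : ∀ (m : ℕ) (y : ℝ),
      HasDerivAt (iteratedDeriv m σ) (iteratedDeriv (m + 1) σ y) y := by
    intro m y
    have hd : DifferentiableAt ℝ (iteratedDeriv m σ) y :=
      ((hsm m).differentiable (by simp)).differentiableAt
    have := hd.hasDerivAt
    rwa [iteratedDeriv_succ]
  have hne0 : ∀ k : ℕ, ∃ b, iteratedDeriv k σ b ≠ 0 := by
    intro k
    by_contra hcon
    push_neg at hcon
    exact hnotpoly (poly_of_deriv_zero k σ hσ hcon)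
  set S : Submodule ℝ C(K, ℝ) := Submodule.span ℝ
    {h : C(K, ℝ) | ∃ ω b, h = rmk K (fun x => σ (⟪ω, x⟫ + b)) (contInner σ hσc ω b)}
    with hSdef
  set A := S.topologicalClosure with hAdef
  have hAc : IsClosed (A : Set C(K, ℝ)) := S.isClosed_topologicalClosure
  have hcL : ∀ L : List (Fin d), Continuous fun x : EuclideanSpace ℝ (Fin d) =>
      (L.map fun j => x j).prod := fun L => continuous_list_prod L fun i _ => contApply i
  -- Step 1: all `x ↦ ∏_{j∈L} x j * σ^{(|L|)}(⟪ω,x⟫+b)` lie in `A`.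
  have claim1 : ∀ (L : List (Fin d)) (ω : EuclideanSpace ℝ (Fin d)) (b : ℝ),
      rmk K (fun x => (L.map fun j => x j).prod * iteratedDeriv L.length σ (⟪ω, x⟫ + b))
        ((hcL L).mul (contInner _ (hcont L.length) ω b)) ∈ A := by
    intro L
    induction L with
    | nil =>
      intro ω b
      have he : rmk K
            (fun x => (List.map (fun j => x j) ([] : List (Fin d))).prod *
              iteratedDeriv (List.length ([] : List (Fin d))) σ (⟪ω, x⟫ + b))
            ((hcL []).mul (contInner _ (hcont (List.length ([] : List (Fin d)))) ω b))
          = rmk K (fun x => σ (⟪ω, x⟫ + b)) (contInner σ hσc ω b) := by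
        ext x
        simp only [rmk_apply, List.map_nil, List.prod_nil, List.length_nil, one_mul,
          iteratedDeriv_zero]
      rw [he]
      exact S.le_topologicalClosure (Submodule.subset_span ⟨ω, b, rfl⟩)
    | cons i L ih =>
      intro ω b
      have hstep := step hK A hAc (hcL L) (hder L.length) (hcont (L.length + 1))
        (hcont L.length) ih i ω b
      have he : rmk K
            (fun x => (List.map (fun j => x j) (i :: L)).prod *
              iteratedDeriv (List.length (i :: L)) σ (⟪ω, x⟫ + b))
            ((hcL (i :: L)).mul (contInner _ (hcont (List.length (i :: L))) ω b))
          = rmk K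
            (fun x => ((L.map fun j => x j).prod * x i) *
              iteratedDeriv (L.length + 1) σ (⟪ω, x⟫ + b))
            (((hcL L).mul (contApply i)).mul (contInner _ (hcont (L.length + 1)) ω b)) := by
        ext x
        simp only [rmk_apply, List.map_cons, List.prod_cons, List.length_cons]
        ring
      rw [he]
      exact hstep
  -- Step 2: all monomials lie in `A`.
  have claim2 : ∀ α : Fin d →₀ ℕ,
      rmk K (fun x => α.prod fun j n => x j ^ n) (contMono α) ∈ A := by
    intro α
    obtain ⟨b, hb⟩ := hne0 α.toMultiset.toList.length
    have hmem := claim1 α.toMultiset.toList 0 b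
    have he : rmk K (fun x => α.prod fun j n => x j ^ n) (contMono α)
        = (iteratedDeriv α.toMultiset.toList.length σ b)⁻¹ •
          rmk K (fun x => (α.toMultiset.toList.map fun j => x j).prod *
              iteratedDeriv α.toMultiset.toList.length σ (⟪(0 : EuclideanSpace ℝ (Fin d)), x⟫ + b))
            ((hcL _).mul (contInner _ (hcont _) 0 b)) := by
      ext x
      simp only [ContinuousMap.smul_apply, rmk_apply, smul_eq_mul, inner_zero_left, zero_add,
        list_prod_eq]
      rw [eq_inv_mul_iff_mul_eq₀ hb]
      exact mul_comm _ _
    rw [he]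
    exact A.smul_mem _ hmem
  -- Step 3: all polynomial functions lie in `A`.
  have contEval : ∀ P : MvPolynomial (Fin d) ℝ,
      Continuous fun x : EuclideanSpace ℝ (Fin d) => MvPolynomial.eval (fun i => x i) P :=
    fun P => P.continuous_eval.comp (continuous_pi fun i => contApply i)
  have claim3 : ∀ P : MvPolynomial (Fin d) ℝ,
      rmk K (fun x => MvPolynomial.eval (fun i => x i) P) (contEval P) ∈ A := by
    intro P
    induction P using MvPolynomial.induction_on' with
    | monomial α a =>
      have he : rmk K (fun x => MvPolynomial.eval (fun i => x i) (MvPolynomial.monomial α a))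
            (contEval _)
          = a • rmk K (fun x => α.prod fun j n => x j ^ n) (contMono α) := by
        ext x
        simp [MvPolynomial.eval_monomial]
      rw [he]
      exact A.smul_mem _ (claim2 α)
    | add p q hp hq =>
      have he : rmk K (fun x => MvPolynomial.eval (fun i => x i) (p + q)) (contEval _)
          = rmk K (fun x => MvPolynomial.eval (fun i => x i) p) (contEval p)
            + rmk K (fun x => MvPolynomial.eval (fun i => x i) q) (contEval q) := by
        ext x; simp
      rw [he]
      exact A.add_mem hp hq
  -- Step 4: Stone–Weierstrass.
  set coords : Fin d → C(K, ℝ) := fun i => rmk K (fun x => x i) (contApply i) with hcoords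
  set B : Subalgebra ℝ C(K, ℝ) := (MvPolynomial.aeval coords).range with hBdef
  have haev : ∀ P : MvPolynomial (Fin d) ℝ,
      MvPolynomial.aeval coords P = rmk K (fun x => MvPolynomial.eval (fun i => x i) P)
        (contEval P) := by
    intro P
    induction P using MvPolynomial.induction_on with
    | C a =>
      ext x
      simp only [MvPolynomial.aeval_C, algebraMap_apply, rmk_apply, MvPolynomial.eval_C,
        smul_eq_mul, mul_one]
    | add p q hp hq => ext x; simp [map_add, hp, hq]
    | mul_X p i hp =>
      ext x
      simp only [map_mul, ContinuousMap.mul_apply, hp, MvPolynomial.aeval_X,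
        MvPolynomial.eval_mul, MvPolynomial.eval_X, rmk_apply, hcoords]
      congr 1
      exact congrArg (fun F => F x) hp
  have hBA : (B : Set C(K, ℝ)) ⊆ (A : Set C(K, ℝ)) := by
    rintro f ⟨P, rfl⟩
    have hmm : (MvPolynomial.aeval coords) P ∈ (A : Set C(K, ℝ)) := by
      rw [haev P]; exact claim3 P
    exact hmm
  have hsep : B.SeparatesPoints := by
    intro x y hxy
    have hxy1 : (x : EuclideanSpace ℝ (Fin d)) ≠ y := fun h => hxy (Subtype.ext h)
    have : ∃ i, (x : EuclideanSpace ℝ (Fin d)) i ≠ (y : EuclideanSpace ℝ (Fin d)) i := by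
      by_contra hc
      push_neg at hc
      exact hxy1 (PiLp.ext hc)
    obtain ⟨i, hi⟩ := this
    exact ⟨coords i, ⟨coords i, ⟨MvPolynomial.X i, MvPolynomial.aeval_X coords i⟩, rfl⟩, hi⟩
  have htop : B.topologicalClosure = ⊤ :=
    ContinuousMap.subalgebra_topologicalClosure_eq_top_of_separatesPoints B hsep
  have hAtop : ∀ F : C(K, ℝ), F ∈ A := by
    intro F
    have h1 : F ∈ B.topologicalClosure := by rw [htop]; trivial
    have h2 : F ∈ closure (B : Set C(K, ℝ)) := h1
    exact (closure_minimal hBA hAc) h2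
  -- lifting elements of `S` back to `SigmaSpan`
  have hlift : ∀ s ∈ S, ∃ g ∈ SigmaSpan d σ, ∀ z : K, g z = s z := by
    intro s hs
    induction hs using Submodule.span_induction with
    | mem h hh =>
      obtain ⟨ω, b, rfl⟩ := hh
      exact ⟨fun x => σ (⟪ω, x⟫ + b), Submodule.subset_span ⟨ω, b, rfl⟩, fun z => rfl⟩
    | zero => exact ⟨0, Submodule.zero_mem _, by simp⟩
    | add u v hu hv ihu ihv =>
      obtain ⟨g1, hg1, he1⟩ := ihu
      obtain ⟨g2, hg2, he2⟩ := ihv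
      exact ⟨g1 + g2, Submodule.add_mem _ hg1 hg2, fun z => by
        simp [he1 z, he2 z]⟩
    | smul a u hu ihu =>
      obtain ⟨g1, hg1, he1⟩ := ihu
      exact ⟨a • g1, Submodule.smul_mem _ a hg1, fun z => by
        simp [he1 z]⟩
  -- first statement
  have main : ∀ f : EuclideanSpace ℝ (Fin d) → ℝ, ContinuousOn f K → ∀ ε : ℝ, 0 < ε →
      ∃ g ∈ SigmaSpan d σ, ∀ x ∈ K, |f x - g x| < ε := by
    intro f hf ε hε
    set F : C(K, ℝ) := ⟨fun x => f x, hf.restrict⟩ with hFdef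
    have hFA : F ∈ closure (S : Set C(K, ℝ)) := hAtop F
    obtain ⟨s, hsS, hds⟩ := Metric.mem_closure_iff.mp hFA ε hε
    obtain ⟨g, hgSpan, hgx⟩ := hlift s hsS
    refine ⟨g, hgSpan, fun x hx => ?_⟩
    have h1 : dist (F ⟨x, hx⟩) (s ⟨x, hx⟩) ≤ dist F s := ContinuousMap.dist_apply_le_dist _
    have h2 : |f x - g x| = dist (F ⟨x, hx⟩) (s ⟨x, hx⟩) := by
      rw [Real.dist_eq, hgx ⟨x, hx⟩]
      rfl
    rw [h2]
    exact lt_of_le_of_lt h1 hds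
  exact ⟨main, fun P ε hε => main _ (contEval P).continuousOn ε hε⟩
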